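/- Let k ≥ 6 be an integer and let s be an integer with 2 ≤ s ≤ (k−1)/2. Then (s/k)·(2k − 2s − 1) < 2·Σ_{h=1}^{s} cos(hπ/k) < (7s/(2k))·(k − s − 1/2). -/

import Mathlib

open Real

lemma sumsq_aux (s : ℕ) :
    ∑ h ∈ Finset.Icc (1 : ℕ) s, (h : ℝ) ^ 2 = s * (s + 1) * (2 * s + 1) / 6 := by
  induction s with
  | zero => simp
  | succ n ih =>
    rw [Finset.sum_Icc_succ_top (by omega), ih]
    push_cast
    ring

lemma sum_quad_aux (s k : ℕ) (c : ℝ) :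
    ∑ h ∈ Finset.Icc (1 : ℕ) s, (1 - c * ((h : ℝ) * π / k) ^ 2)
      = (s : ℝ) - c * (π ^ 2 / (k : ℝ) ^ 2) * ((s : ℝ) * (s + 1) * (2 * s + 1) / 6) := by
  have h1 : ∀ h : ℕ, (1 - c * ((h : ℝ) * π / k) ^ 2)
      = 1 - (c * (π ^ 2 / (k : ℝ) ^ 2)) * (h : ℝ) ^ 2 := by
    intro h; ring
  simp_rw [h1]
  rw [Finset.sum_sub_distrib, Finset.sum_const, Nat.card_Icc, ← Finset.mul_sum, sumsq_aux]
  simp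

lemma cos_upper_aux (x : ℝ) (hx0 : 0 < x) (hx : x ≤ π / 2) :
    Real.cos x < 1 - 3 / 10 * x ^ 2 := by
  have hpi : π < 3.15 := Real.pi_lt_d2
  set y := x / 2 with hy
  have hy0 : 0 < y := by positivity
  have hy1 : y ≤ 1 := by simp only [hy]; nlinarith
  have hyy : y ^ 2 ≤ 0.62016 := by
    have hyb : y ≤ 0.7875 := by simp only [hy]; nlinarith
    nlinarith
  have hsin := Real.sin_gt_sub_cube hy0
  have hs0 : 0 < y - y ^ 3 / 4 := by nlinarith [mul_pos hy0 hy0]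
  have hcos : Real.cos x = 1 - 2 * Real.sin y ^ 2 := by
    have h1 := Real.sin_sq_add_cos_sq y
    have h2 := Real.cos_two_mul y
    have h3 : 2 * y = x := by rw [hy]; ring
    rw [← h3, h2]; nlinarith
  have hx2 : x ^ 2 = 4 * y ^ 2 := by rw [hy] at *; ring
  rw [hcos, hx2]
  have hsq : Real.sin y ^ 2 > (y - y ^ 3 / 4) ^ 2 := by
    have h' : y - y ^ 3 / 4 < Real.sin y := by nlinarith [pow_pos hy0 3]
    nlinarith [mul_pos (sub_pos.2 h') (show 0 < Real.sin y + (y - y ^ 3 / 4) by linarith)]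
  nlinarith [hsq, mul_le_mul_of_nonneg_right hyy (sq_nonneg y),
    pow_nonneg hy0.le 6, sq_nonneg y, mul_nonneg (mul_nonneg hy0.le hy0.le) (pow_nonneg hy0.le 4)]


lemma poly_low_aux (K S P : ℝ) (hk1 : 6 ≤ K) (hs1 : 2 ≤ S) (hskr : 2 * S + 1 ≤ K)
    (hP : P < 9.9225) (hP0 : 0 < P) :
    6 * S * K * (2 * K - 2 * S - 1) < 12 * S * K ^ 2 - P * (S * (S + 1) * (2 * S + 1)) := by
  have hgoal : P * (S + 1) < 6 * K := by nlinarith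
  nlinarith [mul_lt_mul_of_pos_right hgoal (show (0:ℝ) < S * (2 * S + 1) by nlinarith)]

lemma poly_up_aux (K S P : ℝ) (hk1 : 6 ≤ K) (hs1 : 2 ≤ S) (hskr : 2 * S + 1 ≤ K)
    (hP : 9.86 < P) :
    20 * S * K ^ 2 - P * (S * (S + 1) * (2 * S + 1)) < 35 * S * K * (K - S - 1 / 2) := by
  have hkm : (0:ℝ) ≤ K - (2 * S + 1) := by linarith
  have hA : (0:ℝ) ≤ S * (K - (2 * S + 1)) ^ 2 := by positivity
  have hB : (0:ℝ) ≤ S * (K * (K - (2 * S + 1))) := by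
    apply mul_nonneg (by linarith)
    exact mul_nonneg (by linarith) hkm
  have hC : (0:ℝ) < S * K ^ 2 := by positivity
  have hD : P * (S * (S + 1) * (2 * S + 1)) > 9.86 * (S * (S + 1) * (2 * S + 1)) := by
    apply mul_lt_mul_of_pos_right hP
    positivity
  nlinarith [hA, hB, hC, hD, mul_pos (show (0:ℝ) < S by linarith) (show (0:ℝ) < S by linarith),
    mul_pos (mul_pos (show (0:ℝ) < S by linarith) (show (0:ℝ) < S by linarith)) (show (0:ℝ) < S by linarith)]

theorem stmt13 (k s : ℕ) (hk : 6 ≤ k) (hs2 : 2 ≤ s) (hsk : 2 * s ≤ k - 1) :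
    (s : ℝ) / k * (2 * k - 2 * s - 1) <
        2 * ∑ h ∈ Finset.Icc (1 : ℕ) s, Real.cos ((h : ℝ) * π / k) ∧
      2 * ∑ h ∈ Finset.Icc (1 : ℕ) s, Real.cos ((h : ℝ) * π / k) <
        7 * (s : ℝ) / (2 * k) * ((k : ℝ) - s - 1 / 2) := by
  have hk1 : (6 : ℝ) ≤ (k : ℝ) := by exact_mod_cast hk
  have hs1 : (2 : ℝ) ≤ (s : ℝ) := by exact_mod_cast hs2
  have hskn : 2 * s + 1 ≤ k := by omega
  have hskr : 2 * (s : ℝ) + 1 ≤ (k : ℝ) := by exact_mod_cast hskn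
  have hk0 : (0 : ℝ) < k := by linarith
  have hpi0 : (0 : ℝ) < π := Real.pi_pos
  have hpilt : π < 3.15 := Real.pi_lt_d2
  have hpigt : (3.141 : ℝ) < π := by
    have := Real.pi_gt_d6; linarith
  have hpisqlt : π ^ 2 < 9.9225 := by nlinarith
  have hpisqgt : (9.86 : ℝ) < π ^ 2 := by nlinarith
  have h6k2 : (0:ℝ) < 6 * (k:ℝ)^2 := by positivity
  have h10k2 : (0:ℝ) < 10 * (k:ℝ)^2 := by positivity
  have hterm : ∀ h ∈ Finset.Icc (1 : ℕ) s,
      (0 : ℝ) < (h : ℝ) * π / k ∧ (h : ℝ) * π / k ≤ π / 2 := by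
    intro h hh
    rw [Finset.mem_Icc] at hh
    have h1 : (1 : ℝ) ≤ (h : ℝ) := by exact_mod_cast hh.1
    have h2 : (h : ℝ) ≤ (s : ℝ) := by exact_mod_cast hh.2
    constructor
    · positivity
    · rw [div_le_div_iff₀ hk0 (by norm_num : (0:ℝ) < 2)]
      nlinarith
  constructor
  · -- lower bound
    have hsum : ∑ h ∈ Finset.Icc (1 : ℕ) s, (1 - (1/2) * ((h : ℝ) * π / k) ^ 2)
        ≤ ∑ h ∈ Finset.Icc (1 : ℕ) s, Real.cos ((h : ℝ) * π / k) := by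
      apply Finset.sum_le_sum
      intro h _
      have := Real.one_sub_sq_div_two_le_cos (x := (h : ℝ) * π / k)
      linarith
    rw [sum_quad_aux] at hsum
    have key : (s : ℝ) / k * (2 * k - 2 * s - 1) <
        2 * ((s : ℝ) - (1/2) * (π ^ 2 / (k : ℝ) ^ 2) * ((s : ℝ) * (s + 1) * (2 * s + 1) / 6)) := by
      rw [← mul_lt_mul_iff_of_pos_right h6k2]
      have e1 : (s : ℝ) / k * (2 * k - 2 * s - 1) * (6*(k:ℝ)^2)
          = 6*(s:ℝ)*k*(2*k-2*s-1) := by field_simp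
      have e2 : 2 * ((s : ℝ) - (1/2) * (π ^ 2 / (k : ℝ) ^ 2) * ((s : ℝ) * (s + 1) * (2 * s + 1) / 6)) * (6*(k:ℝ)^2)
          = 12*(s:ℝ)*(k:ℝ)^2 - π^2 * ((s:ℝ)*(s+1)*(2*s+1)) := by field_simp; ring
      rw [e1, e2]
      exact poly_low_aux (k:ℝ) (s:ℝ) (π^2) hk1 hs1 hskr hpisqlt (by positivity)
    linarith
  · -- upper bound
    have hne : (Finset.Icc (1 : ℕ) s).Nonempty := by
      rw [Finset.nonempty_Icc]; omega
    have hsum : ∑ h ∈ Finset.Icc (1 : ℕ) s, Real.cos ((h : ℝ) * π / k)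
        < ∑ h ∈ Finset.Icc (1 : ℕ) s, (1 - (3/10) * ((h : ℝ) * π / k) ^ 2) := by
      apply Finset.sum_lt_sum_of_nonempty hne
      intro h hh
      exact cos_upper_aux _ (hterm h hh).1 (hterm h hh).2
    rw [sum_quad_aux] at hsum
    have key : 2 * ((s : ℝ) - (3/10) * (π ^ 2 / (k : ℝ) ^ 2) * ((s : ℝ) * (s + 1) * (2 * s + 1) / 6))
        < 7 * (s : ℝ) / (2 * k) * ((k : ℝ) - s - 1 / 2) := by
      rw [← mul_lt_mul_iff_of_pos_right h10k2]
      have e1 : 2 * ((s : ℝ) - (3/10) * (π ^ 2 / (k : ℝ) ^ 2) * ((s : ℝ) * (s + 1) * (2 * s + 1) / 6)) * (10*(k:ℝ)^2)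
          = 20*(s:ℝ)*(k:ℝ)^2 - π^2 * ((s:ℝ)*(s+1)*(2*s+1)) := by field_simp; ring
      have e2 : 7 * (s : ℝ) / (2 * k) * ((k : ℝ) - s - 1 / 2) * (10*(k:ℝ)^2)
          = 35*(s:ℝ)*k*((k:ℝ) - s - 1/2) := by field_simp; ring
      rw [e1, e2]
      exact poly_up_aux (k:ℝ) (s:ℝ) (π^2) hk1 hs1 hskr hpisqgt
    linarith
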